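/- Let a, b, c, d be four distinct points on a common circle in the Euclidean plane such that b and c lie strictly on the same side of the line through a and d, and such that the unsigned angles satisfy ∠cad ≤ ∠bad ≤ ∠adc. Then |cd| ≤ |bd|. -/

import Mathlib

open EuclideanGeometry

private lemma sin_abs_toReal (θ : Real.Angle) : Real.sin |θ.toReal| = |θ.sin| := by
  rcases le_or_gt 0 θ.toReal with h | h
  · rw [abs_of_nonneg h, ← Real.Angle.sin_toReal,
      abs_of_nonneg (Real.sin_nonneg_of_nonneg_of_le_pi h θ.toReal_le_pi)]
  · rw [abs_of_neg h, Real.sin_neg, ← Real.Angle.sin_toReal,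
      abs_of_neg (Real.sin_neg_of_neg_of_neg_pi_lt h θ.neg_pi_lt_toReal)]

private lemma sin_mono_aux {x y : ℝ} (hx : 0 ≤ x) (hxy : x ≤ y) (hy : y ≤ Real.pi - x) :
    Real.sin x ≤ Real.sin y := by
  have hmono := Real.strictMonoOn_sin.monotoneOn
  have hpi : 0 < Real.pi := Real.pi_pos
  rcases le_or_gt y (Real.pi / 2) with h | h
  · exact hmono ⟨by linarith, by linarith⟩ ⟨by linarith, h⟩ hxy
  · rw [← Real.sin_pi_sub y]
    exact hmono ⟨by linarith, by linarith⟩ ⟨by linarith, by linarith⟩ (by linarith)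

/-- If `a`, `b`, `c`, `d` are four distinct points on a common circle such that `b` and `c`
lie strictly on the same side of the line through `a` and `d`, and the unsigned angles
satisfy `∠ c a d ≤ ∠ b a d ≤ ∠ a d c`, then `|cd| ≤ |bd|`. -/
theorem four_points_on_circle_dist_le
    (a b c d o : EuclideanSpace ℝ (Fin 2)) (r : ℝ) (hr : 0 < r)
    (ha : dist a o = r) (hb : dist b o = r) (hc : dist c o = r) (hd : dist d o = r)
    (hab : a ≠ b) (hac : a ≠ c) (had : a ≠ d)
    (hbc : b ≠ c) (hbd : b ≠ d) (hcd : c ≠ d)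
    (hside : (affineSpan ℝ ({a, d} : Set (EuclideanSpace ℝ (Fin 2)))).SSameSide b c)
    (h1 : ∠ c a d ≤ ∠ b a d) (h2 : ∠ b a d ≤ ∠ a d c) :
    dist c d ≤ dist b d := by
  haveI : Fact (Module.finrank ℝ (EuclideanSpace ℝ (Fin 2)) = 2) :=
    ⟨finrank_euclideanSpace_fin⟩
  haveI : Module.Oriented ℝ (EuclideanSpace ℝ (Fin 2)) (Fin 2) :=
    ⟨(EuclideanSpace.basisFun (Fin 2) ℝ).toBasis.orientation⟩
  set s : EuclideanGeometry.Sphere (EuclideanSpace ℝ (Fin 2)) := ⟨o, r⟩ with hs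
  have ha' : a ∈ s := ha
  have hb' : b ∈ s := hb
  have hc' : c ∈ s := hc
  have hd' : d ∈ s := hd
  -- chord length formulas
  have key : ∀ p : EuclideanSpace ℝ (Fin 2), p ∈ s → p ≠ a → p ≠ d →
      dist p d = 2 * r * Real.sin (∠ p a d) := by
    intro p hp hpa hpd
    have e1 : dist p d / |(∡ p a d).sin| = 2 * r :=
      Sphere.dist_div_sin_oangle_eq_two_mul_radius hp ha' hd' hpa hpd had
    have hsin : Real.sin (∠ p a d) = |(∡ p a d).sin| := by
      rw [angle_eq_abs_oangle_toReal hpa had.symm, sin_abs_toReal]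
    have hne : |(∡ p a d).sin| ≠ 0 := by
      intro h0
      rw [h0, div_zero] at e1
      linarith
    rw [hsin]
    field_simp at e1 ⊢
    linarith [e1]
  have ecd : dist c d = 2 * r * Real.sin (∠ c a d) := key c hc' hac.symm hcd
  have ebd : dist b d = 2 * r * Real.sin (∠ b a d) := key b hb' hab.symm hbd
  -- angle sum in triangle a c d
  have hsum : ∠ c a d + ∠ a d c + ∠ d c a = Real.pi :=
    angle_add_angle_add_angle_eq_pi (p₁ := c) d hac
  have h0 : 0 ≤ ∠ d c a := angle_nonneg _ _ _
  have hadc : ∠ a d c ≤ Real.pi - ∠ c a d := by linarith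
  rw [ecd, ebd]
  have := sin_mono_aux (angle_nonneg c a d) h1 (by linarith)
  nlinarith [this]
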